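/- Let P : ℝⁿ ⊇ Ω → ℝ be convex on a convex open set Ω, R(y) = sup_{x∈Ω}(x·y − P(x)), and suppose ν = (∇P)_♯μ for a measure μ ≪ 𝓛ⁿ concentrated on the differentiability points of P, with ν ≪ 𝓛ⁿ. Then ∇R(∇P(x)) = x for μ-a.e. x, and consequently (∇R)_♯ν = μ. -/

import Mathlib

open MeasureTheory RealInnerProductSpace

private lemma slope_tendsto' {n : ℕ} {F : EuclideanSpace ℝ (Fin n) → ℝ}
    {g y v : EuclideanSpace ℝ (Fin n)} (h : HasGradientAt F g y) :
    Filter.Tendsto (fun t : ℝ => (F (y + t • v) - F y) / t)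
      (nhdsWithin 0 (Set.Ioi 0)) (nhds ⟪g, v⟫) := by
  have hline : HasDerivAt (fun t : ℝ => y + t • v) v 0 := by
    simpa using ((hasDerivAt_id (0:ℝ)).smul_const v).const_add y
  have h2 : HasDerivAt (fun t : ℝ => F (y + t • v)) ⟪g, v⟫ 0 := by
    exact (show HasFDerivAt F ((InnerProductSpace.toDual ℝ _) g) (y + (0:ℝ) • v) by simpa using h.hasFDerivAt).comp_hasDerivAt 0 hline
  have h3 := hasDerivAt_iff_tendsto_slope.mp h2
  have h4 := h3.mono_left (nhdsWithin_mono 0 (by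
    intro t ht
    exact Set.mem_compl_singleton_iff.mpr (ne_of_gt ht)))
  refine h4.congr' ?_
  filter_upwards [self_mem_nhdsWithin] with t ht
  simp [slope, (show (0:ℝ) < t from ht).ne']
  ring

/-- Theorem 2.18(iii): if `R` is the convex conjugate of the convex function `P` over
the open convex set `Ω`, `ν = (∇P)_♯μ` with `μ` concentrated on `Ω`, `μ ≪ 𝓛ⁿ`,
`ν ≪ 𝓛ⁿ`, then `∇R(∇P(x)) = x` for `μ`-a.e. `x`, and consequently `(∇R)_♯ν = μ`. -/
theorem stmt18 {n : ℕ} (Ω : Set (EuclideanSpace ℝ (Fin n)))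
    (hΩo : IsOpen Ω) (hΩc : Convex ℝ Ω)
    (P R : EuclideanSpace ℝ (Fin n) → ℝ)
    (hP : ConvexOn ℝ Ω P)
    (hR : ∀ y : EuclideanSpace ℝ (Fin n),
        IsLUB ((fun x => ⟪x, y⟫ - P x) '' Ω) (R y))
    (μ ν : Measure (EuclideanSpace ℝ (Fin n))) [IsFiniteMeasure μ]
    (hμΩ : μ Ωᶜ = 0) (hμac : μ ≪ volume) (hνac : ν ≪ volume)
    (DP DR : EuclideanSpace ℝ (Fin n) → EuclideanSpace ℝ (Fin n))
    (hDPm : Measurable DP) (hDRm : Measurable DR)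
    (hDP : ∀ᵐ x ∂μ, x ∈ Ω ∧ HasGradientAt P (DP x) x)
    (hν : ν = μ.map DP)
    (hDR : ∀ᵐ y ∂ν, HasGradientAt R (DR y) y) :
    (∀ᵐ x ∂μ, DR (DP x) = x) ∧ ν.map DR = μ := by
  -- pull back the a.e. differentiability of R along DP
  rw [hν] at hDR
  have hDR' : ∀ᵐ x ∂μ, HasGradientAt R (DR (DP x)) (DP x) :=
    ae_of_ae_map hDPm.aemeasurable hDR
  have key : ∀ᵐ x ∂μ, DR (DP x) = x := by
    filter_upwards [hDP, hDR'] with x hx hRx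
    obtain ⟨hxΩ, hPx⟩ := hx
    -- subgradient inequality for P at x
    have hsub : ∀ z ∈ Ω, P x + ⟪DP x, z - x⟫ ≤ P z := by
      intro z hz
      have htend := slope_tendsto' (v := z - x) hPx
      have hle : ∀ᶠ t in nhdsWithin 0 (Set.Ioi (0:ℝ)),
          (P (x + t • (z - x)) - P x) / t ≤ P z - P x := by
        filter_upwards [Ioc_mem_nhdsGT_of_mem (Set.left_mem_Ico.mpr one_pos)]
          with t ht
        obtain ⟨ht0, ht1⟩ := ht
        have hmem : x + t • (z - x) ∈ Ω := by
          have := hΩc hxΩ hz (by linarith : (0:ℝ) ≤ 1 - t) ht0.le (by ring)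
          convert this using 1
          module
        have hcvx : P (x + t • (z - x)) ≤ (1 - t) * P x + t * P z := by
          have := hP.2 hxΩ hz (by linarith : (0:ℝ) ≤ 1 - t) ht0.le (by ring)
          calc P (x + t • (z - x)) = P ((1 - t) • x + t • z) := by
                congr 1; module
            _ ≤ (1 - t) * P x + t * P z := by simpa [smul_eq_mul] using this
        rw [div_le_iff₀ ht0]
        nlinarith
      have := le_of_tendsto htend hle
      linarith
    -- R (DP x) = ⟪x, DP x⟫ - P x
    have hub : R (DP x) ≤ ⟪x, DP x⟫ - P x := by
      refine (hR (DP x)).2 ?_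
      rintro r ⟨z, hz, rfl⟩
      show ⟪z, DP x⟫ - P z ≤ ⟪x, DP x⟫ - P x
      have h1 := hsub z hz
      have h2 : ⟪DP x, z - x⟫ = ⟪z, DP x⟫ - ⟪x, DP x⟫ := by
        rw [real_inner_comm]; rw [inner_sub_left]
      linarith
    have hlbx : ∀ y, ⟪x, y⟫ - P x ≤ R y := fun y =>
      (hR y).1 ⟨x, hxΩ, rfl⟩
    -- x is a subgradient of R at DP x
    have hRsub : ∀ y, R (DP x) + ⟪x, y - DP x⟫ ≤ R y := by
      intro y
      have := hlbx y
      have h2 : ⟪x, y - DP x⟫ = ⟪x, y⟫ - ⟪x, DP x⟫ := inner_sub_right x y (DP x)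
      linarith
    -- uniqueness of subgradient at a point of differentiability
    set g := DR (DP x) with hg
    set v := x - g with hv
    have htend := slope_tendsto' (v := v) hRx
    have hge : ∀ᶠ t in nhdsWithin 0 (Set.Ioi (0:ℝ)),
        ⟪x, v⟫ ≤ (R (DP x + t • v) - R (DP x)) / t := by
      filter_upwards [self_mem_nhdsWithin] with t ht
      have h1 := hRsub (DP x + t • v)
      have h2 : ⟪x, DP x + t • v - DP x⟫ = t * ⟪x, v⟫ := by
        rw [add_sub_cancel_left, real_inner_smul_right]
      rw [le_div_iff₀ ht]
      nlinarith [h1, h2]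
    have hfin : ⟪x, v⟫ ≤ ⟪g, v⟫ := ge_of_tendsto htend hge
    have : ⟪x - g, v⟫ ≤ 0 := by
      rw [inner_sub_left]; linarith
    have hnorm : ‖x - g‖ ^ 2 ≤ 0 := by
      rw [← real_inner_self_eq_norm_sq]
      simpa [hv] using this
    have : x - g = 0 := by
      have := sq_nonneg ‖x - g‖
      have h0 : ‖x - g‖ ^ 2 = 0 := le_antisymm hnorm this
      simpa [pow_eq_zero_iff] using h0
    rw [hg] at this ⊢
    exact (sub_eq_zero.mp this).symm
  refine ⟨key, ?_⟩
  rw [hν, Measure.map_map hDRm hDPm]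
  have : μ.map (DR ∘ DP) = μ.map id := by
    apply Measure.map_congr
    filter_upwards [key] with x hx
    simpa using hx
  simpa using this
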